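/- Let e : ZFSet ≃ ZFSet be a permutation of the universe of ZFC sets that fixes every finite set, i.e., e s = s whenever s.toSet is finite. Then for all f M N : ZFSet, the π-translation of 'f is a function from M to N' holds if and only if ZFSet.IsFunc (e M) (e N) (e f); explicitly: [(for every z ∈ e f there exist x ∈ e M and y ∈ e N with z = e.symm {e.symm {x}, e.symm {x, y}}) and (for every x ∈ e M there exists a unique y with e.symm {e.symm {x}, e.symm {x, y}} ∈ e f)] if and only if e f is a function from e M to e N in the standard sense (e f ⊆ (e M).prod (e N) and for every x ∈ e M there is a unique y with ZFSet.pair x y ∈ e f). -/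

import Mathlib

theorem pi_function_absolute (e : ZFSet ≃ ZFSet)
    (he : ∀ s : ZFSet, s.toSet.Finite → e s = s) :
    ∀ f M N : ZFSet,
      ((∀ z ∈ e f, ∃ x ∈ e M, ∃ y ∈ e N, z = e.symm {e.symm {x}, e.symm {x, y}}) ∧
        ∀ x ∈ e M, ∃! y : ZFSet, e.symm {e.symm {x}, e.symm {x, y}} ∈ e f) ↔
      ZFSet.IsFunc (e M) (e N) (e f) := by
  have hs : ∀ s : ZFSet, s.toSet.Finite → e.symm s = s := fun s h => by
    conv_lhs => rw [← he s h]
    exact e.symm_apply_apply s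
  have hfin : ∀ x y : ZFSet, ({x, y} : ZFSet).toSet.Finite := by
    intro x y
    have : ({x, y} : ZFSet).toSet = {x, y} := by
      ext z; change z ∈ ({x, y} : ZFSet) ↔ _; simp [ZFSet.mem_insert_iff]
    rw [this]; exact (Set.finite_singleton y).insert x
  have hfin1 : ∀ x : ZFSet, ({x} : ZFSet).toSet.Finite := by
    intro x
    have : ({x} : ZFSet).toSet = {x} := by ext z; change z ∈ ({x} : ZFSet) ↔ _; simp
    rw [this]; exact Set.finite_singleton x
  have key : ∀ x y : ZFSet,
      e.symm {e.symm {x}, e.symm {x, y}} = ZFSet.pair x y := by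
    intro x y
    rw [hs _ (hfin1 x), hs _ (hfin x y), hs _ (hfin _ _)]
    rfl
  intro f M N
  simp only [key]
  constructor
  · rintro ⟨h1, h2⟩
    refine ⟨fun z hz => ?_, h2⟩
    obtain ⟨x, hx, y, hy, rfl⟩ := h1 z hz
    exact ZFSet.pair_mem_prod.mpr ⟨hx, hy⟩
  · rintro ⟨h1, h2⟩
    refine ⟨fun z hz => ?_, h2⟩
    have := h1 hz
    rw [ZFSet.mem_prod] at this
    obtain ⟨x, hx, y, hy, rfl⟩ := this
    exact ⟨x, hx, y, hy, rfl⟩
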